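/- If choice functions are fully substitutable, separable, and satisfy IRC, then an outcome is fully trail-stable if and only if it is trail-stable. -/

import Mathlib

variable {F X : Type*} [DecidableEq X] [DecidableEq F]

/-- Contracts in `Y` involving agent `f` (as buyer or seller). -/
def Xf (b s : X → F) (f : F) (Y : Finset X) : Finset X :=
  Y.filter (fun x => b x = f ∨ s x = f)

/-- Upstream contracts of `f` in `Y`. -/
def Yb (b : X → F) (f : F) (Y : Finset X) : Finset X := Y.filter (fun x => b x = f)

/-- Downstream contracts of `f` in `Z`. -/
def Zs (s : X → F) (f : F) (Z : Finset X) : Finset X := Z.filter (fun x => s x = f)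

/-- Chosen upstream contracts of `f` from upstream offers `Y` and downstream offers `Z`. -/
def CB (b s : X → F) (C : F → Finset X → Finset X) (f : F) (Y Z : Finset X) : Finset X :=
  (C f (Yb b f Y ∪ Zs s f Z)).filter (fun x => b x = f)

/-- Chosen downstream contracts of `f` from downstream offers `Z` and upstream offers `Y`. -/
def CS (b s : X → F) (C : F → Finset X → Finset X) (f : F) (Z Y : Finset X) : Finset X :=
  (C f (Zs s f Z ∪ Yb b f Y)).filter (fun x => s x = f)

/-- Rejected upstream contracts. -/
def RB (b s : X → F) (C : F → Finset X → Finset X) (f : F) (Y Z : Finset X) : Finset X :=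
  Yb b f Y \ CB b s C f Y Z

/-- Rejected downstream contracts. -/
def RS (b s : X → F) (C : F → Finset X → Finset X) (f : F) (Z Y : Finset X) : Finset X :=
  Zs s f Z \ CS b s C f Z Y

/-- Full substitutability: same-side substitutability and cross-side complementarity. -/
def FullySubstitutable (b s : X → F) (C : F → Finset X → Finset X) : Prop :=
  (∀ (f : F) (Y' Y Z : Finset X), Y' ⊆ Y → RB b s C f Y' Z ⊆ RB b s C f Y Z) ∧
  (∀ (f : F) (Z' Z Y : Finset X), Z' ⊆ Z → RS b s C f Z' Y ⊆ RS b s C f Z Y) ∧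
  (∀ (f : F) (Y Z' Z : Finset X), Z' ⊆ Z → RB b s C f Y Z ⊆ RB b s C f Y Z') ∧
  (∀ (f : F) (Z Y' Y : Finset X), Y' ⊆ Y → RS b s C f Z Y ⊆ RS b s C f Z Y')

/-- Irrelevance of rejected contracts. -/
def IRC (C : F → Finset X → Finset X) : Prop :=
  ∀ (f : F) (Y Z : Finset X), C f Y ⊆ Z → Z ⊆ Y → C f Z = C f Y

/-- `A` is `(W,f)`-rational: `A_f ⊆ C^f(W_f ∪ A_f)`. -/
def Rational (b s : X → F) (C : F → Finset X → Finset X) (W A : Finset X) (f : F) : Prop :=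
  Xf b s f A ⊆ C f (Xf b s f W ∪ Xf b s f A)

/-- `A` is acceptable (individually rational for all agents). -/
def Acceptable (b s : X → F) (C : F → Finset X → Finset X) (A : Finset X) : Prop :=
  ∀ f : F, C f (Xf b s f A) = Xf b s f A

/-- `{y,z}` is a `(W,f)`-rational pair: jointly but not individually `(W,f)`-rational. -/
def RationalPair (b s : X → F) (C : F → Finset X → Finset X) (W : Finset X) (f : F)
    (y z : X) : Prop :=
  ¬ Rational b s C W {y} f ∧ ¬ Rational b s C W {z} f ∧ Rational b s C W {y, z} f

/-- A locally blocking trail to outcome `A`. -/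
def LocallyBlockingTrail (b s : X → F) (C : F → Finset X → Finset X) (A : Finset X) : Prop :=
  ∃ (M : ℕ) (x : ℕ → X), 0 < M ∧
    (∀ i j, i < M → j < M → x i = x j → i = j) ∧
    (∀ i, i + 1 < M → b (x i) = s (x (i + 1))) ∧
    (∀ i, i < M → x i ∉ A) ∧
    Rational b s C A {x 0} (s (x 0)) ∧
    (∀ i, 0 < i → i < M → Rational b s C A {x (i - 1), x i} (b (x (i - 1)))) ∧
    Rational b s C A {x (M - 1)} (b (x (M - 1)))

/-- A blocking trail to outcome `A` (with initial- or final-segment rationality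
at intermediate agents). -/
def BlockingTrail (b s : X → F) (C : F → Finset X → Finset X) (A : Finset X) : Prop :=
  ∃ (M : ℕ) (x : ℕ → X), 0 < M ∧
    (∀ i j, i < M → j < M → x i = x j → i = j) ∧
    (∀ i, i + 1 < M → b (x i) = s (x (i + 1))) ∧
    (∀ i, i < M → x i ∉ A) ∧
    Rational b s C A {x 0} (s (x 0)) ∧
    ((∀ i, 0 < i → i < M →
        Rational b s C A ((Finset.range (i + 1)).image x) (b (x (i - 1)))) ∨
     (∀ i, 0 < i → i < M →
        Rational b s C A ((Finset.Ico (i - 1) M).image x) (b (x (i - 1))))) ∧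
    Rational b s C A {x (M - 1)} (b (x (M - 1)))

/-- Fully trail-stable outcome. -/
def FullyTrailStable (b s : X → F) (C : F → Finset X → Finset X) (A : Finset X) : Prop :=
  Acceptable b s C A ∧ ¬ LocallyBlockingTrail b s C A

/-- Trail-stable outcome. -/
def TrailStable (b s : X → F) (C : F → Finset X → Finset X) (A : Finset X) : Prop :=
  Acceptable b s C A ∧ ¬ BlockingTrail b s C A

/-- Set-stable outcome. -/
def SetStable (b s : X → F) (C : F → Finset X → Finset X) (A : Finset X) : Prop :=
  Acceptable b s C A ∧
  ¬ ∃ Z : Finset X, Z.Nonempty ∧ Disjoint Z A ∧ ∀ f : F, Rational b s C A Z f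

/-- Separable choice functions. -/
def Separable (b s : X → F) (C : F → Finset X → Finset X) : Prop :=
  ∀ (f : F) (A W : Finset X) (y z : X), b y = f → s z = f → y ∉ A → z ∉ A →
    Rational b s C W A f → RationalPair b s C W f y z →
    Rational b s C W (A ∪ {y, z}) f

/-- Simple choice functions (with an intensity map). -/
def Simple (b s : X → F) (C : F → Finset X → Finset X) : Prop :=
  ∀ f : F, ∃ w : X → ℝ, ∀ (W A : Finset X), Acceptable b s C A →
    Rational b s C W A f →
    ∀ y ∈ A, b y = f → ∃ z ∈ A, s z = f ∧ w y > w z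

/-- Aggregate upstream rejection function. -/
def RBagg [Fintype F] (b s : X → F) (C : F → Finset X → Finset X) (Y Z : Finset X) : Finset X :=
  (Finset.univ : Finset F).biUnion (fun f => RB b s C f Y Z)

/-- Aggregate downstream rejection function. -/
def RSagg [Fintype F] (b s : X → F) (C : F → Finset X → Finset X) (Z Y : Finset X) : Finset X :=
  (Finset.univ : Finset F).biUnion (fun f => RS b s C f Z Y)

open Finset

set_option linter.unusedSectionVars false
set_option linter.unusedVariables false

section Aux

variable {b s : X → F} {C : F → Finset X → Finset X} {f : F}

lemma mem_Xf {S : Finset X} {a : X} :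
    a ∈ Xf b s f S ↔ a ∈ S ∧ (b a = f ∨ s a = f) := Finset.mem_filter

lemma Xf_self {S : Finset X} (h : ∀ t ∈ S, b t = f ∨ s t = f) : Xf b s f S = S :=
  Finset.filter_true_of_mem h

/-- master context computation -/
lemma ctx_master (A U V : Finset X) :
    Yb b f (A ∪ U) ∪ Zs s f (A ∪ V)
      = Xf b s f A ∪ U.filter (fun a => b a = f) ∪ V.filter (fun a => s a = f) := by
  ext a
  simp only [Yb, Zs, Xf, mem_union, mem_filter]
  tauto

lemma ctx_master' (A U V : Finset X) :
    Zs s f (A ∪ V) ∪ Yb b f (A ∪ U)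
      = Xf b s f A ∪ U.filter (fun a => b a = f) ∪ V.filter (fun a => s a = f) := by
  rw [union_comm]; exact ctx_master A U V

lemma ctx1 (A R : Finset X) (hR : ∀ r ∈ R, b r = f) :
    Yb b f (A ∪ R) ∪ Zs s f A = Xf b s f A ∪ R := by
  have h := ctx_master (b := b) (s := s) (f := f) A R ∅
  rw [union_empty] at h
  rw [h, filter_empty, union_empty, filter_true_of_mem hR]

lemma ctx2 (A R : Finset X) (hR : ∀ r ∈ R, s r = f) :
    Zs s f (A ∪ R) ∪ Yb b f A = Xf b s f A ∪ R := by
  have h := ctx_master' (b := b) (s := s) (f := f) A ∅ R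
  rw [union_empty] at h
  rw [h, filter_empty, union_empty, filter_true_of_mem hR]

lemma ctx3 (A T : Finset X) (hT : ∀ t ∈ T, b t = f ∨ s t = f) :
    Yb b f (A ∪ T) ∪ Zs s f (A ∪ T) = Xf b s f A ∪ T := by
  rw [ctx_master]
  ext a
  simp only [mem_union, mem_filter]
  constructor
  · rintro ((h | ⟨h1, h2⟩) | ⟨h1, h2⟩) <;> tauto
  · rintro (h | h)
    · tauto
    · rcases hT a h with h' | h' <;> tauto

lemma ctx3' (A T : Finset X) (hT : ∀ t ∈ T, b t = f ∨ s t = f) :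
    Zs s f (A ∪ T) ∪ Yb b f (A ∪ T) = Xf b s f A ∪ T := by
  rw [union_comm]; exact ctx3 A T hT

/-- context for erasing a seller-only element from the seller side -/
lemma ctx4 (A T : Finset X) (w : X) (hT : ∀ t ∈ T, b t = f ∨ s t = f) (hw : b w ≠ f) :
    Zs s f (A ∪ T.erase w) ∪ Yb b f (A ∪ T) = Xf b s f A ∪ T.erase w := by
  rw [ctx_master']
  ext a
  simp only [mem_union, mem_filter, mem_erase]
  constructor
  · rintro ((h | ⟨h1, h2⟩) | ⟨⟨h1, h2⟩, h3⟩)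
    · tauto
    · exact Or.inr ⟨fun he => hw (he ▸ h2), h1⟩
    · tauto
  · rintro (h | ⟨h1, h2⟩)
    · tauto
    · rcases hT a h2 with h' | h' <;> tauto

/-- context for erasing a buyer-only element from the buyer side -/
lemma ctx5 (A T : Finset X) (w : X) (hT : ∀ t ∈ T, b t = f ∨ s t = f) (hw : s w ≠ f) :
    Yb b f (A ∪ T.erase w) ∪ Zs s f (A ∪ T) = Xf b s f A ∪ T.erase w := by
  rw [ctx_master]
  ext a
  simp only [mem_union, mem_filter, mem_erase]
  constructor
  · rintro ((h | ⟨⟨h1, h2⟩, h3⟩) | ⟨h1, h2⟩)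
    · tauto
    · tauto
    · exact Or.inr ⟨fun he => hw (he ▸ h2), h1⟩
  · rintro (h | ⟨h1, h2⟩)
    · tauto
    · rcases hT a h2 with h' | h' <;> tauto

lemma mem_RB {Y Z : Finset X} {a : X} :
    a ∈ RB b s C f Y Z ↔ (a ∈ Y ∧ b a = f) ∧ a ∉ C f (Yb b f Y ∪ Zs s f Z) := by
  simp only [RB, CB, Yb, mem_sdiff, mem_filter]
  tauto

lemma mem_RS {Z Y : Finset X} {a : X} :
    a ∈ RS b s C f Z Y ↔ (a ∈ Z ∧ s a = f) ∧ a ∉ C f (Zs s f Z ∪ Yb b f Y) := by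
  simp only [RS, CS, Zs, mem_sdiff, mem_filter]
  tauto

/-- KEY LEMMA B: in a rational all-buyers set every singleton is rational. -/
lemma lemB (hfs1 : ∀ (f : F) (Y' Y Z : Finset X), Y' ⊆ Y → RB b s C f Y' Z ⊆ RB b s C f Y Z)
    (A R : Finset X) (hRb : ∀ r ∈ R, b r = f) (hrat : R ⊆ C f (Xf b s f A ∪ R))
    {y : X} (hy : y ∈ R) : y ∈ C f (Xf b s f A ∪ {y}) := by
  have hby : b y = f := hRb y hy
  have h1 : y ∉ RB b s C f (A ∪ R) A := by
    rw [mem_RB, ctx1 A R hRb]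
    intro h
    exact h.2 (hrat hy)
  have h2 : y ∉ RB b s C f (A ∪ {y}) A := fun h => by
    exact h1 (hfs1 f (A ∪ {y}) (A ∪ R) A
      (union_subset_union_right (singleton_subset_iff.mpr hy)) h)
  rw [mem_RB, ctx1 A {y} (by simp [hby])] at h2
  by_contra hmem
  exact h2 ⟨⟨mem_union_right _ (mem_singleton_self y), hby⟩, hmem⟩

/-- KEY LEMMA S: in a rational all-sellers set every singleton is rational. -/
lemma lemS (hfs2 : ∀ (f : F) (Z' Z Y : Finset X), Z' ⊆ Z → RS b s C f Z' Y ⊆ RS b s C f Z Y)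
    (A R : Finset X) (hRs : ∀ r ∈ R, s r = f) (hrat : R ⊆ C f (Xf b s f A ∪ R))
    {y : X} (hy : y ∈ R) : y ∈ C f (Xf b s f A ∪ {y}) := by
  have hsy : s y = f := hRs y hy
  have h1 : y ∉ RS b s C f (A ∪ R) A := by
    rw [mem_RS, ctx2 A R hRs]
    intro h
    exact h.2 (hrat hy)
  have h2 : y ∉ RS b s C f (A ∪ {y}) A := fun h => by
    exact h1 (hfs2 f (A ∪ {y}) (A ∪ R) A
      (union_subset_union_right (singleton_subset_iff.mpr hy)) h)
  rw [mem_RS, ctx2 A {y} (by simp [hsy])] at h2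
  by_contra hmem
  exact h2 ⟨⟨mem_union_right _ (mem_singleton_self y), hsy⟩, hmem⟩

end Aux
section Aux2

variable {b s : X → F} {C : F → Finset X → Finset X} {f : F}

/-- remove a seller-only element keeping a chosen seller chosen (cross-side, conj 4?? no: conj 2) -/
lemma rem2 (hfs2 : ∀ (f : F) (Z' Z Y : Finset X), Z' ⊆ Z → RS b s C f Z' Y ⊆ RS b s C f Z Y)
    (A T : Finset X) (hT : ∀ t ∈ T, b t = f ∨ s t = f)
    {z w : X} (hz : z ∈ T) (hzs : s z = f) (hzc : z ∈ C f (Xf b s f A ∪ T))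
    (hwT : w ∈ T) (hwb : b w ≠ f) (hzw : z ≠ w) :
    z ∈ C f (Xf b s f A ∪ T.erase w) := by
  have h1 : z ∉ RS b s C f (A ∪ T) (A ∪ T) := by
    rw [mem_RS, ctx3' A T hT]
    exact fun h => h.2 hzc
  have h2 : z ∉ RS b s C f (A ∪ T.erase w) (A ∪ T) := fun h =>
    h1 (hfs2 f (A ∪ T.erase w) (A ∪ T) (A ∪ T)
      (union_subset_union_right (erase_subset w T)) h)
  rw [mem_RS, ctx4 A T w hT hwb] at h2
  by_contra hmem
  exact h2 ⟨⟨mem_union_right _ (mem_erase.mpr ⟨hzw, hz⟩), hzs⟩, hmem⟩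

/-- remove a buyer-only element keeping a chosen buyer chosen (conj 1) -/
lemma rem1 (hfs1 : ∀ (f : F) (Y' Y Z : Finset X), Y' ⊆ Y → RB b s C f Y' Z ⊆ RB b s C f Y Z)
    (A T : Finset X) (hT : ∀ t ∈ T, b t = f ∨ s t = f)
    {z w : X} (hz : z ∈ T) (hzb : b z = f) (hzc : z ∈ C f (Xf b s f A ∪ T))
    (hwT : w ∈ T) (hws : s w ≠ f) (hzw : z ≠ w) :
    z ∈ C f (Xf b s f A ∪ T.erase w) := by
  have h1 : z ∉ RB b s C f (A ∪ T) (A ∪ T) := by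
    rw [mem_RB, ctx3 A T hT]
    exact fun h => h.2 hzc
  have h2 : z ∉ RB b s C f (A ∪ T.erase w) (A ∪ T) := fun h =>
    h1 (hfs1 f (A ∪ T.erase w) (A ∪ T) (A ∪ T)
      (union_subset_union_right (erase_subset w T)) h)
  rw [mem_RB, ctx5 A T w hT hws] at h2
  by_contra hmem
  exact h2 ⟨⟨mem_union_right _ (mem_erase.mpr ⟨hzw, hz⟩), hzb⟩, hmem⟩

/-- IRC: erasing a rejected element does not change the choice. -/
lemma irc_erase (hirc : IRC C) (hC : ∀ (f : F) (A : Finset X), C f A ⊆ A)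
    (A T : Finset X) {t : X} (ht : t ∈ T) (htA : t ∉ A)
    (htc : t ∉ C f (Xf b s f A ∪ T)) :
    C f (Xf b s f A ∪ T.erase t) = C f (Xf b s f A ∪ T) := by
  have he : Xf b s f A ∪ T.erase t = (Xf b s f A ∪ T).erase t := by
    ext a
    simp only [mem_union, mem_erase, mem_Xf]
    constructor
    · rintro (h | ⟨h1, h2⟩)
      · exact ⟨fun hat => htA (hat ▸ h.1), Or.inl h⟩
      · tauto
    · rintro ⟨h1, h2 | h3⟩ <;> tauto
  rw [he]
  exact hirc f (Xf b s f A ∪ T) _ (fun a ha => mem_erase.mpr ⟨fun hat => htc (hat ▸ ha), hC _ _ ha⟩)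
    (erase_subset _ _)

end Aux2
section Aux3

variable {b s : X → F} {C : F → Finset X → Finset X} {f : F}

/-- KEY LEMMA D: decomposition of support of a rational set at a seller. -/
lemma lemD (hfs : FullySubstitutable b s C) (hirc : IRC C)
    (hC : ∀ (f : F) (A : Finset X), C f A ⊆ A)
    (A N : Finset X) (hN : ∀ n ∈ N, (b n = f ∨ s n = f) ∧ n ∉ A)
    (hNr : N ⊆ C f (Xf b s f A ∪ N)) {z : X} (hzN : z ∈ N) (hzs : s z = f) :
    z ∈ C f (Xf b s f A ∪ {z}) ∨
    (∃ p ∈ N, p ≠ z ∧ b p = f ∧ ({p, z} : Finset X) ⊆ C f (Xf b s f A ∪ {p, z})) ∨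
    (∃ y ∈ N, y ≠ z ∧ b y = f ∧ y ∈ C f (Xf b s f A ∪ {y})) := by
  classical
  have hex : ∃ n : ℕ, ∃ T : Finset X, T ⊆ N ∧ z ∈ T ∧ z ∈ C f (Xf b s f A ∪ T) ∧ T.card = n :=
    ⟨N.card, N, Finset.Subset.refl N, hzN, hNr hzN, rfl⟩
  obtain ⟨T, hTN, hzT, hzc, hcard⟩ := Nat.find_spec hex
  have hmin : ∀ T' : Finset X, T' ⊆ N → z ∈ T' → z ∈ C f (Xf b s f A ∪ T') →
      T.card ≤ T'.card := by
    intro T' h1 h2 h3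
    rw [hcard]
    exact Nat.find_min' hex ⟨T', h1, h2, h3, rfl⟩
  have hTinv : ∀ t ∈ T, b t = f ∨ s t = f := fun t ht => (hN t (hTN ht)).1
  have hTnA : ∀ t ∈ T, t ∉ A := fun t ht => (hN t (hTN ht)).2
  -- all elements of T other than z are buyers
  have hTb : ∀ t ∈ T, t ≠ z → b t = f := by
    intro w hw hwz
    by_contra hwb
    have := rem2 hfs.2.1 A T hTinv hzT hzs hzc hw hwb (Ne.symm hwz)
    have hle := hmin (T.erase w) ((erase_subset w T).trans hTN)
      (mem_erase.mpr ⟨Ne.symm hwz, hzT⟩) this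
    exact absurd hle (not_le.mpr (card_erase_lt_of_mem hw))
  -- T is rational
  have hTrat : ∀ t ∈ T, t ∈ C f (Xf b s f A ∪ T) := by
    intro t ht
    by_contra htc
    have htz : t ≠ z := fun h => htc (h ▸ hzc)
    have hCeq := irc_erase (b := b) (s := s) hirc hC A T ht (hTnA t ht) htc
    have := hmin (T.erase t) ((erase_subset t T).trans hTN)
      (mem_erase.mpr ⟨Ne.symm htz, hzT⟩) (hCeq ▸ hzc)
    exact absurd this (not_le.mpr (card_erase_lt_of_mem ht))
  by_cases h0 : T.erase z = ∅
  · -- T = {z}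
    left
    have hT1 : T = {z} := by
      ext a
      simp only [mem_singleton]
      constructor
      · intro ha
        by_contra haz
        exact absurd (mem_erase.mpr ⟨haz, ha⟩) (by simp [h0])
      · rintro rfl; exact hzT
    rwa [hT1] at hzc
  · by_cases h1 : ∃ p, T.erase z = {p}
    · obtain ⟨p, hp⟩ := h1
      have hpT : p ∈ T.erase z := by rw [hp]; exact mem_singleton_self p
      have hpz : p ≠ z := (mem_erase.mp hpT).1
      have hpmemT : p ∈ T := (mem_erase.mp hpT).2
      have hTeq : T = {z, p} := by
        rw [← Finset.insert_erase hzT, hp]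
      have hpair : ({p, z} : Finset X) = T := by rw [hTeq, pair_comm]
      right; left
      refine ⟨p, hTN hpmemT, hpz, hTb p hpmemT hpz, ?_⟩
      rw [hpair]
      exact fun t ht => hTrat t ht
    · -- card (T.erase z) ≥ 2
      have h2 : 2 ≤ (T.erase z).card := by
        rcases Nat.lt_or_ge (T.erase z).card 2 with h | h
        · interval_cases hcc : (T.erase z).card
          · exact absurd (card_eq_zero.mp hcc) h0
          · exact absurd (card_eq_one.mp hcc) h1
        · exact h
      by_cases hzb : b z = f
      · -- T all buyers
        left
        have hall : ∀ t ∈ T, b t = f := fun t ht => by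
          by_cases h : t = z
          · rw [h]; exact hzb
          · exact hTb t ht h
        exact lemB hfs.1 A T hall (fun t ht => hTrat t ht) hzT
      · by_cases hbo : ∃ w ∈ T, w ≠ z ∧ s w ≠ f
        · obtain ⟨y2, hy2T, hy2z, hy2s⟩ := hbo
          have hzy2 : z ≠ y2 := Ne.symm hy2z
          have hz1 : z ∈ T.erase y2 := mem_erase.mpr ⟨hzy2, hzT⟩
          have hznc : z ∉ C f (Xf b s f A ∪ T.erase y2) := by
            intro h
            have := hmin (T.erase y2) ((erase_subset y2 T).trans hTN) hz1 h
            exact absurd this (not_le.mpr (card_erase_lt_of_mem hy2T))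
          set R := (T.erase y2).erase z with hR
          have hRT : ∀ t ∈ R, t ∈ T := fun t ht =>
            (erase_subset y2 T) ((erase_subset z (T.erase y2)) ht)
          have hRz : ∀ t ∈ R, t ≠ z := fun t ht => (mem_erase.mp ht).1
          have hRy2 : ∀ t ∈ R, t ≠ y2 := fun t ht =>
            (mem_erase.mp ((erase_subset z (T.erase y2)) ht : t ∈ T.erase y2)).1
          have hRb : ∀ t ∈ R, b t = f := fun t ht => hTb t (hRT t ht) (hRz t ht)
          have hRsub : ∀ t ∈ R, t ∈ C f (Xf b s f A ∪ T.erase y2) := by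
            intro t ht
            exact rem1 hfs.1 A T hTinv (hRT t ht) (hRb t ht) (hTrat t (hRT t ht))
              hy2T hy2s (hRy2 t ht)
          have hCeq : C f (Xf b s f A ∪ R) = C f (Xf b s f A ∪ T.erase y2) :=
            irc_erase hirc hC A (T.erase y2) hz1 (hTnA z hzT) hznc
          have hRrat : R ⊆ C f (Xf b s f A ∪ R) := fun t ht => by
            rw [hCeq]; exact hRsub t ht
          have hRne : R.Nonempty := by
            rw [Finset.card_pos.symm] at *
            have : R = (T.erase z).erase y2 := Finset.erase_right_comm
            rw [this, card_erase_of_mem (mem_erase.mpr ⟨hy2z, hy2T⟩)]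
            omega
          obtain ⟨y, hyR⟩ := hRne
          right; right
          exact ⟨y, hTN (hRT y hyR), hRz y hyR, hRb y hyR,
            lemB hfs.1 A R hRb hRrat hyR⟩
        · -- T all sellers
          left
          push_neg at hbo
          have hall : ∀ t ∈ T, s t = f := fun t ht => by
            by_cases h : t = z
            · rw [h]; exact hzs
            · exact hbo t ht h
          exact lemS hfs.2.1 A T hall (fun t ht => hTrat t ht) hzT

end Aux3
section Aux4

variable {b s : X → F} {C : F → Finset X → Finset X} {f : F}

/-- KEY LEMMA D dual: decomposition of support of a rational set at a buyer. -/
lemma lemD' (hfs : FullySubstitutable b s C) (hirc : IRC C)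
    (hC : ∀ (f : F) (A : Finset X), C f A ⊆ A)
    (A N : Finset X) (hN : ∀ n ∈ N, (b n = f ∨ s n = f) ∧ n ∉ A)
    (hNr : N ⊆ C f (Xf b s f A ∪ N)) {z : X} (hzN : z ∈ N) (hzb : b z = f) :
    z ∈ C f (Xf b s f A ∪ {z}) ∨
    (∃ p ∈ N, p ≠ z ∧ s p = f ∧ ({z, p} : Finset X) ⊆ C f (Xf b s f A ∪ {z, p})) ∨
    (∃ y ∈ N, y ≠ z ∧ s y = f ∧ y ∈ C f (Xf b s f A ∪ {y})) := by
  classical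
  have hex : ∃ n : ℕ, ∃ T : Finset X, T ⊆ N ∧ z ∈ T ∧ z ∈ C f (Xf b s f A ∪ T) ∧ T.card = n :=
    ⟨N.card, N, Finset.Subset.refl N, hzN, hNr hzN, rfl⟩
  obtain ⟨T, hTN, hzT, hzc, hcard⟩ := Nat.find_spec hex
  have hmin : ∀ T' : Finset X, T' ⊆ N → z ∈ T' → z ∈ C f (Xf b s f A ∪ T') →
      T.card ≤ T'.card := by
    intro T' h1 h2 h3
    rw [hcard]
    exact Nat.find_min' hex ⟨T', h1, h2, h3, rfl⟩
  have hTinv : ∀ t ∈ T, b t = f ∨ s t = f := fun t ht => (hN t (hTN ht)).1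
  have hTnA : ∀ t ∈ T, t ∉ A := fun t ht => (hN t (hTN ht)).2
  -- all elements of T other than z are sellers
  have hTs : ∀ t ∈ T, t ≠ z → s t = f := by
    intro w hw hwz
    by_contra hws
    have := rem1 hfs.1 A T hTinv hzT hzb hzc hw hws (Ne.symm hwz)
    have hle := hmin (T.erase w) ((erase_subset w T).trans hTN)
      (mem_erase.mpr ⟨Ne.symm hwz, hzT⟩) this
    exact absurd hle (not_le.mpr (card_erase_lt_of_mem hw))
  -- T is rational
  have hTrat : ∀ t ∈ T, t ∈ C f (Xf b s f A ∪ T) := by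
    intro t ht
    by_contra htc
    have htz : t ≠ z := fun h => htc (h ▸ hzc)
    have hCeq := irc_erase (b := b) (s := s) hirc hC A T ht (hTnA t ht) htc
    have := hmin (T.erase t) ((erase_subset t T).trans hTN)
      (mem_erase.mpr ⟨Ne.symm htz, hzT⟩) (hCeq ▸ hzc)
    exact absurd this (not_le.mpr (card_erase_lt_of_mem ht))
  by_cases h0 : T.erase z = ∅
  · left
    have hT1 : T = {z} := by
      ext a
      simp only [mem_singleton]
      constructor
      · intro ha
        by_contra haz
        exact absurd (mem_erase.mpr ⟨haz, ha⟩) (by simp [h0])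
      · rintro rfl; exact hzT
    rwa [hT1] at hzc
  · by_cases h1 : ∃ p, T.erase z = {p}
    · obtain ⟨p, hp⟩ := h1
      have hpT : p ∈ T.erase z := by rw [hp]; exact mem_singleton_self p
      have hpz : p ≠ z := (mem_erase.mp hpT).1
      have hpmemT : p ∈ T := (mem_erase.mp hpT).2
      have hTeq : T = {z, p} := by
        rw [← Finset.insert_erase hzT, hp]
      right; left
      refine ⟨p, hTN hpmemT, hpz, hTs p hpmemT hpz, ?_⟩
      rw [← hTeq]
      exact fun t ht => hTrat t ht
    · have h2 : 2 ≤ (T.erase z).card := by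
        rcases Nat.lt_or_ge (T.erase z).card 2 with h | h
        · interval_cases hcc : (T.erase z).card
          · exact absurd (card_eq_zero.mp hcc) h0
          · exact absurd (card_eq_one.mp hcc) h1
        · exact h
      by_cases hzs : s z = f
      · -- T all sellers
        left
        have hall : ∀ t ∈ T, s t = f := fun t ht => by
          by_cases h : t = z
          · rw [h]; exact hzs
          · exact hTs t ht h
        exact lemS hfs.2.1 A T hall (fun t ht => hTrat t ht) hzT
      · by_cases hbo : ∃ w ∈ T, w ≠ z ∧ b w ≠ f
        · obtain ⟨y2, hy2T, hy2z, hy2b⟩ := hbo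
          have hzy2 : z ≠ y2 := Ne.symm hy2z
          have hz1 : z ∈ T.erase y2 := mem_erase.mpr ⟨hzy2, hzT⟩
          have hznc : z ∉ C f (Xf b s f A ∪ T.erase y2) := by
            intro h
            have := hmin (T.erase y2) ((erase_subset y2 T).trans hTN) hz1 h
            exact absurd this (not_le.mpr (card_erase_lt_of_mem hy2T))
          set R := (T.erase y2).erase z with hR
          have hRT : ∀ t ∈ R, t ∈ T := fun t ht =>
            (erase_subset y2 T) ((erase_subset z (T.erase y2)) ht)
          have hRz : ∀ t ∈ R, t ≠ z := fun t ht => (mem_erase.mp ht).1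
          have hRy2 : ∀ t ∈ R, t ≠ y2 := fun t ht =>
            (mem_erase.mp ((erase_subset z (T.erase y2)) ht : t ∈ T.erase y2)).1
          have hRs : ∀ t ∈ R, s t = f := fun t ht => hTs t (hRT t ht) (hRz t ht)
          have hRsub : ∀ t ∈ R, t ∈ C f (Xf b s f A ∪ T.erase y2) := by
            intro t ht
            exact rem2 hfs.2.1 A T hTinv (hRT t ht) (hRs t ht) (hTrat t (hRT t ht))
              hy2T hy2b (hRy2 t ht)
          have hCeq : C f (Xf b s f A ∪ R) = C f (Xf b s f A ∪ T.erase y2) :=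
            irc_erase hirc hC A (T.erase y2) hz1 (hTnA z hzT) hznc
          have hRrat : R ⊆ C f (Xf b s f A ∪ R) := fun t ht => by
            rw [hCeq]; exact hRsub t ht
          have hRne : R.Nonempty := by
            rw [Finset.card_pos.symm] at *
            have : R = (T.erase z).erase y2 := Finset.erase_right_comm
            rw [this, card_erase_of_mem (mem_erase.mpr ⟨hy2z, hy2T⟩)]
            omega
          obtain ⟨y, hyR⟩ := hRne
          right; right
          exact ⟨y, hTN (hRT y hyR), hRz y hyR, hRs y hyR,
            lemS hfs.2.1 A R hRs hRrat hyR⟩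
        · -- T all buyers
          left
          push_neg at hbo
          have hall : ∀ t ∈ T, b t = f := fun t ht => by
            by_cases h : t = z
            · rw [h]; exact hzb
            · exact hbo t ht h
          exact lemB hfs.1 A T hall (fun t ht => hTrat t ht) hzT

end Aux4
section Trails

variable {b s : X → F} {C : F → Finset X → Finset X} {f : F} {A : Finset X}

/-- A partial trail (with rational consecutive pairs), indexed `0..k`. -/
def IsTrail (b s : X → F) (C : F → Finset X → Finset X) (A : Finset X) (k : ℕ) (z : ℕ → X) :
    Prop :=
  (∀ i j, i ≤ k → j ≤ k → z i = z j → i = j) ∧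
  (∀ i, i < k → b (z i) = s (z (i + 1))) ∧
  (∀ i, i ≤ k → z i ∉ A) ∧
  (∀ i, 0 < i → i ≤ k → Rational b s C A {z (i - 1), z i} (b (z (i - 1))))

lemma lbt_of_trail {k : ℕ} {z : ℕ → X} (ht : IsTrail b s C A k z)
    (hst : Rational b s C A {z 0} (s (z 0))) (hen : Rational b s C A {z k} (b (z k))) :
    LocallyBlockingTrail b s C A := by
  obtain ⟨hinj, hlink, hnA, hpairs⟩ := ht
  refine ⟨k + 1, z, Nat.succ_pos k, ?_, ?_, ?_, hst, ?_, ?_⟩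
  · intro i j hi hj h
    exact hinj i j (by omega) (by omega) h
  · intro i hi
    exact hlink i (by omega)
  · intro i hi
    exact hnA i (by omega)
  · intro i hi1 hi2
    exact hpairs i hi1 (by omega)
  · simpa using hen

/-- `c` is reachable: a partial trail with rational start ending at `c`. -/
def Reach (b s : X → F) (C : F → Finset X → Finset X) (A : Finset X) (c : X) : Prop :=
  ∃ (k : ℕ) (z : ℕ → X), IsTrail b s C A k z ∧ Rational b s C A {z 0} (s (z 0)) ∧ z k = c

/-- `c` is co-reachable: a partial trail with rational end starting at `c`. -/
def CoReach (b s : X → F) (C : F → Finset X → Finset X) (A : Finset X) (c : X) : Prop :=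
  ∃ (k : ℕ) (z : ℕ → X), IsTrail b s C A k z ∧ z 0 = c ∧ Rational b s C A {z k} (b (z k))

lemma trail_single {c : X} (hcA : c ∉ A) : IsTrail b s C A 0 (fun _ => c) := by
  refine ⟨fun i j hi hj _ => by omega, fun i hi => by omega, fun i _ => hcA,
    fun i hi1 hi2 => by omega⟩

lemma reach_extend {p q : X} (hre : Reach b s C A p) (hbp : b p = f) (hsq : s q = f)
    (hqA : q ∉ A) (hpair : Rational b s C A {p, q} f) : Reach b s C A q := by
  obtain ⟨k, z, ⟨hinj, hlink, hnA, hpairs⟩, hst, hend⟩ := hre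
  by_cases hq : ∃ j, j ≤ k ∧ z j = q
  · obtain ⟨j, hj, hzj⟩ := hq
    exact ⟨j, z, ⟨fun i i' hi hi' h => hinj i i' (hi.trans hj) (hi'.trans hj) h,
      fun i hi => hlink i (by omega), fun i hi => hnA i (hi.trans hj),
      fun i h1 h2 => hpairs i h1 (h2.trans hj)⟩, hst, hzj⟩
  · push_neg at hq
    refine ⟨k + 1, fun t => if t ≤ k then z t else q, ⟨?_, ?_, ?_, ?_⟩, ?_, ?_⟩
    · intro i j hi hj h
      by_cases h1 : i ≤ k <;> by_cases h2 : j ≤ k <;> simp only [h1, h2, if_pos, if_neg,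
        if_true, if_false] at h
      · exact hinj i j h1 h2 h
      · exact absurd h (hq i h1)
      · exact absurd h.symm (hq j h2)
      · omega
    · intro i hi
      by_cases h1 : i < k
      · have e1 : i ≤ k := by omega
        have e2 : i + 1 ≤ k := by omega
        simp only [e1, e2, if_true, if_pos]
        exact hlink i h1
      · have e0 : i = k := by omega
        subst e0
        have e2 : ¬ (i + 1 ≤ i) := by omega
        simp only [le_refl, if_true, e2, if_false]
        rw [hend, hbp, hsq]
    · intro i hi
      by_cases h1 : i ≤ k
      · simp only [h1, if_true]; exact hnA i h1
      · simp only [h1, if_false]; exact hqA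
    · intro i hi1 hi2
      by_cases h1 : i ≤ k
      · have e1 : i - 1 ≤ k := by omega
        simp only [h1, e1, if_true]
        exact hpairs i hi1 h1
      · have e0 : i = k + 1 := by omega
        subst e0
        have e1 : k + 1 - 1 = k := by omega
        rw [e1]
        simp only [le_refl, if_true, Nat.lt_irrefl, if_neg (by omega : ¬ (k + 1 ≤ k))]
        rw [hend, hbp]
        exact hpair
    · simp only [Nat.zero_le, if_true]
      exact hst
    · simp only [if_neg (by omega : ¬ (k + 1 ≤ k))]

lemma coreach_extend {p q : X} (hre : CoReach b s C A q) (hbp : b p = f) (hsq : s q = f)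
    (hpA : p ∉ A) (hpair : Rational b s C A {p, q} f) : CoReach b s C A p := by
  obtain ⟨k, z, ⟨hinj, hlink, hnA, hpairs⟩, hz0, hend⟩ := hre
  by_cases hp : ∃ j, j ≤ k ∧ z j = p
  · obtain ⟨j, hj, hzj⟩ := hp
    refine ⟨k - j, fun t => z (j + t), ⟨?_, ?_, ?_, ?_⟩, by simpa using hzj, ?_⟩
    · intro i i' hi hi' h
      have := hinj (j + i) (j + i') (by omega) (by omega) h
      omega
    · intro i hi
      show b (z (j + i)) = s (z (j + (i + 1)))
      have e : j + (i + 1) = (j + i) + 1 := by omega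
      rw [e]
      exact hlink (j + i) (by omega)
    · intro i hi
      exact hnA (j + i) (by omega)
    · intro i hi1 hi2
      show Rational b s C A {z (j + (i - 1)), z (j + i)} (b (z (j + (i - 1))))
      have e1 : j + (i - 1) = (j + i) - 1 := by omega
      rw [e1]
      exact hpairs (j + i) (by omega) (by omega)
    · show Rational b s C A {z (j + (k - j))} (b (z (j + (k - j))))
      have e : j + (k - j) = k := by omega
      rw [e]
      exact hend
  · push_neg at hp
    refine ⟨k + 1, fun t => if t = 0 then p else z (t - 1), ⟨?_, ?_, ?_, ?_⟩, by simp, ?_⟩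
    · intro i i' hi hi' h
      by_cases h1 : i = 0 <;> by_cases h2 : i' = 0 <;> simp only [h1, h2, if_pos, if_neg,
        if_true, if_false] at h
      · omega
      · exact absurd h.symm (hp (i' - 1) (by omega))
      · exact absurd h (hp (i - 1) (by omega))
      · have := hinj (i - 1) (i' - 1) (by omega) (by omega) h
        omega
    · intro i hi
      by_cases h1 : i = 0
      · subst h1
        show b p = s (z 0)
        rw [hz0, hbp, hsq]
      · simp only [h1, if_false, if_neg (by omega : ¬ (i + 1 = 0))]
        have e : i + 1 - 1 = (i - 1) + 1 := by omega
        rw [e]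
        exact hlink (i - 1) (by omega)
    · intro i hi
      by_cases h1 : i = 0
      · simp only [h1, if_true]; exact hpA
      · simp only [h1, if_false]; exact hnA (i - 1) (by omega)
    · intro i hi1 hi2
      by_cases h1 : i = 1
      · subst h1
        simp only [if_pos rfl, if_neg (by omega : ¬ (1 = 0)), Nat.sub_self]
        rw [hz0]
        simpa [hbp] using hpair
      · have e1 : ¬ (i - 1 = 0) := by omega
        have e2 : ¬ (i = 0) := by omega
        simp only [e1, e2, if_false]
        have e3 : i - 1 - 1 = (i - 1) - 1 := rfl
        have e4 : i - 1 = (i - 1 - 1) + 1 := by omega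
        have := hpairs (i - 1) (by omega) (by omega)
        convert this using 3 <;> omega
    · simp only [if_neg (by omega : ¬ (k + 1 = 0))]
      have e : k + 1 - 1 = k := by omega
      rw [e]
      exact hend

end Trails
section Rat

variable {b s : X → F} {C : F → Finset X → Finset X} {f : F} {A : Finset X}

lemma rational_single {y : X} (h : b y = f ∨ s y = f) :
    Rational b s C A {y} f ↔ y ∈ C f (Xf b s f A ∪ {y}) := by
  unfold Rational
  rw [Xf_self (by simpa using h)]
  simp [singleton_subset_iff]

lemma rational_pair {p q : X} (hp : b p = f ∨ s p = f) (hq : b q = f ∨ s q = f) :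
    Rational b s C A {p, q} f ↔ ({p, q} : Finset X) ⊆ C f (Xf b s f A ∪ {p, q}) := by
  unfold Rational
  rw [Xf_self (fun t ht => by rcases mem_insert.mp ht with h | h
                              · subst h; exact hp
                              · rw [mem_singleton.mp h]; exact hq)]

end Rat

section BTtoLBT

variable {b s : X → F} {C : F → Finset X → Finset X} {A : Finset X}

lemma bt_to_lbt (hfs : FullySubstitutable b s C) (hirc : IRC C)
    (hC : ∀ (f : F) (A : Finset X), C f A ⊆ A) :
    BlockingTrail b s C A → LocallyBlockingTrail b s C A := by
  rintro ⟨M, x, hM, hinj, hlink, hnA, hstart, hmid, hend⟩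
  rcases hmid with hL | hR
  · -- initial segments
    have key : ∀ i, i < M → LocallyBlockingTrail b s C A ∨ Reach b s C A (x i) := by
      intro i
      induction i using Nat.strong_induction_on with
      | _ i IH =>
        intro hiM
        by_cases hi0 : i = 0
        · subst hi0
          exact Or.inr ⟨0, fun _ => x 0, trail_single (hnA 0 hM), hstart, rfl⟩
        · have hi1 : 0 < i := Nat.pos_of_ne_zero hi0
          set f := b (x (i - 1)) with hf
          have hsxi : s (x i) = f := by
            have := hlink (i - 1) (by omega)
            rw [show i - 1 + 1 = i by omega] at this
            exact this.symm
          have hseg := hL i hi1 hiM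
          have hNr : Xf b s f ((range (i + 1)).image x) ⊆
              C f (Xf b s f A ∪ Xf b s f ((range (i + 1)).image x)) := hseg
          have hmemN : ∀ n ∈ Xf b s f ((range (i + 1)).image x),
              (b n = f ∨ s n = f) ∧ n ∉ A := by
            intro n hn
            obtain ⟨hn1, hn2⟩ := mem_Xf.mp hn
            obtain ⟨t, ht, hxt⟩ := mem_image.mp hn1
            exact ⟨hn2, hxt ▸ hnA t (by simp only [mem_range] at ht; omega)⟩
          have hziN : x i ∈ Xf b s f ((range (i + 1)).image x) :=
            mem_Xf.mpr ⟨mem_image.mpr ⟨i, mem_range.mpr (by omega), rfl⟩, Or.inr hsxi⟩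
          rcases lemD hfs hirc hC A _ hmemN hNr hziN hsxi with
            h1 | ⟨p, hpN, hpz, hpb, hpr⟩ | ⟨y, hyN, hyz, hyb, hyr⟩
          · refine Or.inr ⟨0, fun _ => x i, trail_single (hnA i hiM), ?_, rfl⟩
            rw [hsxi]
            exact (rational_single (Or.inr hsxi)).mpr h1
          · obtain ⟨hp1, _⟩ := mem_Xf.mp hpN
            obtain ⟨t, ht, hxt⟩ := mem_image.mp hp1
            have hti : t < i := by
              simp only [mem_range] at ht
              rcases Nat.lt_or_ge t i with h | h
              · exact h
              · exfalso; apply hpz; rw [← hxt]; congr 1; omega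
            rcases IH t hti (by omega) with hlbt | hre
            · exact Or.inl hlbt
            · refine Or.inr (reach_extend (f := f) (hxt ▸ hre) hpb hsxi (hnA i hiM) ?_)
              exact (rational_pair (Or.inl hpb) (Or.inr hsxi)).mpr hpr
          · obtain ⟨hy1, _⟩ := mem_Xf.mp hyN
            obtain ⟨t, ht, hxt⟩ := mem_image.mp hy1
            have hti : t < i := by
              simp only [mem_range] at ht
              rcases Nat.lt_or_ge t i with h | h
              · exact h
              · exfalso; apply hyz; rw [← hxt]; congr 1; omega
            rcases IH t hti (by omega) with hlbt | hre
            · exact Or.inl hlbt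
            · obtain ⟨k, zz, htr, hst, hzk⟩ := hre
              refine Or.inl (lbt_of_trail htr hst ?_)
              rw [hzk, hxt, hyb]
              exact (rational_single (Or.inl hyb)).mpr hyr
    rcases key (M - 1) (by omega) with h | h
    · exact h
    · obtain ⟨k, zz, htr, hst, hzk⟩ := h
      refine lbt_of_trail htr hst ?_
      rw [hzk]
      exact hend
  · -- final segments
    have key : ∀ k, k ≤ M - 1 → LocallyBlockingTrail b s C A ∨ CoReach b s C A (x (M - 1 - k)) := by
      intro k
      induction k using Nat.strong_induction_on with
      | _ k IH =>
        intro hkM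
        by_cases hk0 : k = 0
        · subst hk0
          refine Or.inr ⟨0, fun _ => x (M - 1), trail_single (hnA (M - 1) (by omega)), rfl, ?_⟩
          simpa using hend
        · have hk1 : 0 < k := Nat.pos_of_ne_zero hk0
          set i := M - 1 - k with hi
          have hiM : i + 1 < M := by omega
          set f := b (x i) with hf
          have hseg := hR (i + 1) (by omega) (by omega)
          rw [show i + 1 - 1 = i by omega] at hseg
          have hNr : Xf b s f ((Ico i M).image x) ⊆
              C f (Xf b s f A ∪ Xf b s f ((Ico i M).image x)) := hseg
          have hmemN : ∀ n ∈ Xf b s f ((Ico i M).image x),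
              (b n = f ∨ s n = f) ∧ n ∉ A := by
            intro n hn
            obtain ⟨hn1, hn2⟩ := mem_Xf.mp hn
            obtain ⟨t, ht, hxt⟩ := mem_image.mp hn1
            exact ⟨hn2, hxt ▸ hnA t (by simp only [mem_Ico] at ht; omega)⟩
          have hziN : x i ∈ Xf b s f ((Ico i M).image x) :=
            mem_Xf.mpr ⟨mem_image.mpr ⟨i, mem_Ico.mpr ⟨le_rfl, by omega⟩, rfl⟩, Or.inl rfl⟩
          rcases lemD' hfs hirc hC A _ hmemN hNr hziN rfl with
            h1 | ⟨p, hpN, hpz, hps, hpr⟩ | ⟨y, hyN, hyz, hys, hyr⟩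
          · refine Or.inr ⟨0, fun _ => x i, trail_single (hnA i (by omega)), rfl, ?_⟩
            exact (rational_single (Or.inl rfl)).mpr h1
          · obtain ⟨hp1, _⟩ := mem_Xf.mp hpN
            obtain ⟨t, ht, hxt⟩ := mem_image.mp hp1
            simp only [mem_Ico] at ht
            have hti : i < t := by
              rcases Nat.lt_or_ge i t with h | h
              · exact h
              · exfalso; apply hpz; rw [← hxt]; congr 1; omega
            have hk' : M - 1 - (M - 1 - t) = t := by omega
            rcases IH (M - 1 - t) (by omega) (by omega) with hlbt | hre
            · exact Or.inl hlbt
            · rw [hk'] at hre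
              refine Or.inr (coreach_extend (f := f) (hxt ▸ hre) rfl hps (hnA i (by omega)) ?_)
              exact (rational_pair (Or.inl rfl) (Or.inr hps)).mpr hpr
          · obtain ⟨hy1, _⟩ := mem_Xf.mp hyN
            obtain ⟨t, ht, hxt⟩ := mem_image.mp hy1
            simp only [mem_Ico] at ht
            have hti : i < t := by
              rcases Nat.lt_or_ge i t with h | h
              · exact h
              · exfalso; apply hyz; rw [← hxt]; congr 1; omega
            have hk' : M - 1 - (M - 1 - t) = t := by omega
            rcases IH (M - 1 - t) (by omega) (by omega) with hlbt | hre
            · exact Or.inl hlbt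
            · rw [hk'] at hre
              obtain ⟨k', zz, htr, hz0, hendr⟩ := hre
              refine Or.inl (lbt_of_trail htr ?_ hendr)
              rw [hz0, hxt]
              have : s y = f := hys
              rw [this]
              exact (rational_single (Or.inr hys)).mpr hyr
    rcases key (M - 1) le_rfl with h | h
    · exact h
    · rw [show M - 1 - (M - 1) = 0 by omega] at h
      obtain ⟨k', zz, htr, hz0, hendr⟩ := h
      refine lbt_of_trail htr ?_ hendr
      rw [hz0]
      exact hstart

end BTtoLBT
section LBTtoBT

variable {b s : X → F} {C : F → Finset X → Finset X} {A : Finset X}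

lemma lbt_to_bt (hfs : FullySubstitutable b s C) (hsep : Separable b s C) :
    LocallyBlockingTrail b s C A → BlockingTrail b s C A := by
  intro h
  classical
  have hex : ∃ M : ℕ, ∃ x : ℕ → X, 0 < M ∧
      (∀ i j, i < M → j < M → x i = x j → i = j) ∧
      (∀ i, i + 1 < M → b (x i) = s (x (i + 1))) ∧
      (∀ i, i < M → x i ∉ A) ∧
      Rational b s C A {x 0} (s (x 0)) ∧
      (∀ i, 0 < i → i < M → Rational b s C A {x (i - 1), x i} (b (x (i - 1)))) ∧
      Rational b s C A {x (M - 1)} (b (x (M - 1))) := h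
  obtain ⟨x, hM, hinj, hlink, hnA, hstart, hpairs, hend⟩ := Nat.find_spec hex
  set M := Nat.find hex with hMdef
  have hmin := fun (M' : ℕ) (hM' : M' < M) => Nat.find_min hex hM'
  refine ⟨M, x, hM, hinj, hlink, hnA, hstart, Or.inl ?_, hend⟩
  intro i hi1 hi2
  have hM2 : 2 ≤ M := by omega
  -- no prefix ends rationally before the end
  have hsing1 : ∀ t, t + 1 < M → ¬ Rational b s C A {x t} (b (x t)) := by
    intro t ht hrat
    refine hmin (t + 1) (by omega) ⟨x, by omega, ?_, ?_, ?_, hstart, ?_, hrat⟩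
    · intro i' j' hi' hj' hh; exact hinj i' j' (by omega) (by omega) hh
    · intro i' hi'; exact hlink i' (by omega)
    · intro i' hi'; exact hnA i' (by omega)
    · intro i' h1 h2; exact hpairs i' h1 (by omega)
  -- no suffix starts rationally after the start
  have hsing2 : ∀ t, 0 < t → t < M → ¬ Rational b s C A {x t} (s (x t)) := by
    intro t ht1 ht2 hrat
    refine hmin (M - t) (by omega) ⟨fun j => x (t + j), by omega, ?_, ?_, ?_, hrat, ?_, ?_⟩
    · intro i' j' hi' hj' hh
      have := hinj (t + i') (t + j') (by omega) (by omega) hh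
      omega
    · intro i' hi'
      show b (x (t + i')) = s (x (t + (i' + 1)))
      rw [show t + (i' + 1) = (t + i') + 1 by omega]
      exact hlink (t + i') (by omega)
    · intro i' hi'; exact hnA (t + i') (by omega)
    · intro i' h1 h2
      show Rational b s C A {x (t + (i' - 1)), x (t + i')} (b (x (t + (i' - 1))))
      rw [show t + (i' - 1) = (t + i') - 1 by omega]
      exact hpairs (t + i') (by omega) (by omega)
    · show Rational b s C A {x (t + (M - t - 1))} (b (x (t + (M - t - 1))))
      rw [show t + (M - t - 1) = M - 1 by omega]
      exact hend
  -- no loops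
  have hnoloop : ∀ t, t < M → b (x t) ≠ s (x t) := by
    intro t ht heq
    by_cases ht0 : t = 0
    · subst ht0
      refine hmin 1 (by omega) ⟨x, by omega, ?_, ?_, ?_, hstart, ?_, ?_⟩
      · intro i' j' hi' hj' _; omega
      · intro i' hi'; omega
      · intro i' hi'; have : i' = 0 := by omega
        subst this; exact hnA 0 (by omega)
      · intro i' h1 h2; omega
      · show Rational b s C A {x 0} (b (x 0))
        rw [heq]; exact hstart
    · have ht1 : 0 < t := Nat.pos_of_ne_zero ht0
      have hlk : b (x (t - 1)) = s (x t) := by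
        have := hlink (t - 1) (by omega)
        rwa [show t - 1 + 1 = t by omega] at this
      have hpr := hpairs t ht1 ht
      have hRb : ∀ r ∈ ({x (t - 1), x t} : Finset X), b r = b (x (t - 1)) := by
        intro r hr
        rcases mem_insert.mp hr with h | h
        · rw [h]
        · rw [mem_singleton.mp h, heq, ← hlk]
      have hsub := (rational_pair (b := b) (s := s) (C := C) (A := A)
        (Or.inl (hRb _ (mem_insert_self _ _)))
        (Or.inl (hRb _ (mem_insert_of_mem (mem_singleton_self _))))).mp hpr
      have := lemB hfs.1 A {x (t - 1), x t} hRb hsub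
        (mem_insert_of_mem (mem_singleton_self (x t)))
      apply hsing2 t ht1 ht
      rw [← hlk] at *
      exact (rational_single (b := b) (s := s)
        (Or.inl (hRb _ (mem_insert_of_mem (mem_singleton_self _))))).mpr this
  -- the agent of step i
  have hsxi : s (x i) = b (x (i - 1)) := by
    have := hlink (i - 1) (by omega)
    rw [show i - 1 + 1 = i by omega] at this
    exact this.symm
  set f := b (x (i - 1)) with hf
  -- key induction on partial segments
  have main : ∀ t, t ≤ i → Rational b s C A
      (if b (x t) = f then (Xf b s f ((range (t + 1)).image x)).erase (x t)
       else Xf b s f ((range (t + 1)).image x)) f := by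
    intro t
    induction t with
    | zero =>
      intro _
      have himg : (range 1).image x = {x 0} := by
        rw [range_one, image_singleton]
      by_cases hb0 : b (x 0) = f
      · rw [if_pos hb0, himg]
        have : (Xf b s f ({x 0} : Finset X)).erase (x 0) = ∅ := by
          ext a
          simp only [mem_erase, mem_Xf, mem_singleton, notMem_empty, iff_false]
          rintro ⟨h1, h2, _⟩
          exact h1 h2
        rw [this]
        intro a ha
        simp [Xf] at ha
      · rw [if_neg hb0, himg]
        by_cases hs0 : s (x 0) = f
        · have : Xf b s f ({x 0} : Finset X) = {x 0} :=
            Xf_self (fun t ht => by rw [mem_singleton.mp ht]; exact Or.inr hs0)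
          rw [this, ← hs0]
          exact hstart
        · have : Xf b s f ({x 0} : Finset X) = ∅ := by
            ext a
            simp only [mem_Xf, mem_singleton, notMem_empty, iff_false]
            rintro ⟨rfl, h | h⟩
            · exact hb0 h
            · exact hs0 h
          rw [this]
          intro a ha
          simp [Xf] at ha
    | succ t IHt =>
      intro ht
      have IH := IHt (by omega)
      have htM : t + 1 < M := by omega
      have himg : (range (t + 1 + 1)).image x = insert (x (t + 1)) ((range (t + 1)).image x) := by
        rw [range_add_one, image_insert]
      have hnotmem : x (t + 1) ∉ (range (t + 1)).image x := by
        intro hmem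
        obtain ⟨u, hu, hxu⟩ := mem_image.mp hmem
        simp only [mem_range] at hu
        have := hinj u (t + 1) (by omega) (by omega) hxu
        omega
      by_cases hb : b (x t) = f
      · -- separability step
        have hst1 : s (x (t + 1)) = f := by
          rw [← hlink t (by omega)]; exact hb
        have hbt1 : b (x (t + 1)) ≠ f := by
          intro hh
          exact hnoloop (t + 1) (by omega) (hh.trans hst1.symm)
        have hxtXf : x t ∈ Xf b s f ((range (t + 1)).image x) :=
          mem_Xf.mpr ⟨mem_image.mpr ⟨t, mem_range.mpr (by omega), rfl⟩, Or.inl hb⟩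
        have E1 : (if b (x (t + 1)) = f
              then (Xf b s f ((range (t + 1 + 1)).image x)).erase (x (t + 1))
              else Xf b s f ((range (t + 1 + 1)).image x))
            = ((Xf b s f ((range (t + 1)).image x)).erase (x t)) ∪ {x t, x (t + 1)} := by
          rw [if_neg hbt1, himg, Xf, filter_insert, if_pos (Or.inr hst1)]
          ext a
          simp only [mem_insert, mem_union, mem_erase, mem_singleton, Xf, mem_filter]
          constructor
          · rintro (h | h)
            · tauto
            · by_cases hax : a = x t <;> tauto
          · rintro (⟨h1, h2⟩ | h)
            · tauto
            · rcases h with h | h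
              · subst h
                right
                exact mem_filter.mp hxtXf
              · tauto
        have hn1 : x t ∉ (Xf b s f ((range (t + 1)).image x)).erase (x t) :=
          notMem_erase _ _
        have hn2 : x (t + 1) ∉ (Xf b s f ((range (t + 1)).image x)).erase (x t) := by
          intro hmem
          exact hnotmem (mem_Xf.mp (mem_of_mem_erase hmem)).1
        have hIH' : Rational b s C A ((Xf b s f ((range (t + 1)).image x)).erase (x t)) f := by
          rw [if_pos hb] at IH
          exact IH
        have hrp : RationalPair b s C A f (x t) (x (t + 1)) := by
          refine ⟨?_, ?_, ?_⟩
          · rw [← hb]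
            exact hsing1 t (by omega)
          · rw [← hst1]
            exact hsing2 (t + 1) (by omega) (by omega)
          · have := hpairs (t + 1) (by omega) (by omega)
            rwa [show t + 1 - 1 = t from rfl, hb] at this
        have := hsep f ((Xf b s f ((range (t + 1)).image x)).erase (x t)) A
          (x t) (x (t + 1)) hb hst1 hn1 hn2 hIH' hrp
        rw [E1]
        exact this
      · -- no-op step
        have hst1 : s (x (t + 1)) ≠ f := by
          rw [← hlink t (by omega)]; exact hb
        have E2 : (if b (x (t + 1)) = f
              then (Xf b s f ((range (t + 1 + 1)).image x)).erase (x (t + 1))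
              else Xf b s f ((range (t + 1 + 1)).image x))
            = (if b (x t) = f then (Xf b s f ((range (t + 1)).image x)).erase (x t)
               else Xf b s f ((range (t + 1)).image x)) := by
          rw [if_neg hb]
          by_cases hbt1 : b (x (t + 1)) = f
          · rw [if_pos hbt1, himg, Xf, filter_insert, if_pos (Or.inl hbt1),
              erase_insert (fun hmem => hnotmem (mem_filter.mp hmem).1)]
            rfl
          · rw [if_neg hbt1, himg, Xf, filter_insert,
              if_neg (by rintro (h | h); exact hbt1 h; exact hst1 h)]
            rfl
        rw [E2]
        exact IH
  -- conclude
  have hbxi : b (x i) ≠ f := by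
    intro hh
    exact hnoloop i (by omega) (hh.trans hsxi.symm)
  have hmain := main i le_rfl
  rw [if_neg hbxi] at hmain
  -- transfer: Xf of the filtered set equals itself
  have hXX : Xf b s f (Xf b s f ((range (i + 1)).image x)) =
      Xf b s f ((range (i + 1)).image x) :=
    Xf_self (fun a ha => (mem_Xf.mp ha).2)
  unfold Rational at hmain ⊢
  rwa [hXX] at hmain

end LBTtoBT

/-- under full substitutability, separability and IRC, an
outcome is fully trail-stable iff it is trail-stable. -/
theorem fullyTrailStable_iff_trailStable [Fintype X] (b s : X → F)
    (C : F → Finset X → Finset X)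
    (hC : ∀ (f : F) (A : Finset X), C f A ⊆ A)
    (hfs : FullySubstitutable b s C) (hsep : Separable b s C) (hirc : IRC C)
    (A : Finset X) :
    FullyTrailStable b s C A ↔ TrailStable b s C A := by
  constructor
  · rintro ⟨hacc, hnl⟩
    exact ⟨hacc, fun hbt => hnl (bt_to_lbt hfs hirc hC hbt)⟩
  · rintro ⟨hacc, hnt⟩
    exact ⟨hacc, fun hlbt => hnt (lbt_to_bt hfs hsep hlbt)⟩
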